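/- Let H be a real Hilbert space, L : H × H → ℝ ∪ {+∞} an anti-selfdual Lagrangian, and ω ∈ ℝ. If x, y ∈ A²_H([0,T]) both satisfy the differential inclusion −(u̇(t) + ω u(t), u(t)) ∈ ∂L(u(t), u̇(t) + ω u(t)) for almost every t ∈ [0,T], then ‖x(t) − y(t)‖ ≤ e^{−ωt}‖x(0) − y(0)‖ for every t ∈ [0,T]. In particular, the flow map x(0) ↦ x(t) is a contraction for ω > 0 and is 1-Lipschitz for ω = 0. -/

import Mathlib

open scoped RealInnerProductSpace NNReal

noncomputable section

/-- Convexity for `EReal`-valued functions. -/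
def ERealConvexOn {E : Type*} [AddCommGroup E] [Module ℝ E] (f : E → EReal) : Prop :=
  ∀ x y : E, ∀ s t : ℝ, 0 ≤ s → 0 ≤ t → s + t = 1 →
    f (s • x + t • y) ≤ (s : EReal) * f x + (t : EReal) * f y

/-- The Legendre–Fenchel dual, in both variables, of a Lagrangian on `H × H`. -/
def lagrangianDualH {H : Type*} [NormedAddCommGroup H] [InnerProductSpace ℝ H]
    (L : H × H → EReal) (q y : H) : EReal :=
  ⨆ x : H, ⨆ p : H, ((⟪q, x⟫ + ⟪y, p⟫ : ℝ) : EReal) - L (x, p)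

/-- A Lagrangian on a Hilbert space is anti-selfdual if `L*(p,x) = L(−x,−p)`. -/
def IsASDH {H : Type*} [NormedAddCommGroup H] [InnerProductSpace ℝ H]
    (L : H × H → EReal) : Prop :=
  ∀ p x : H, lagrangianDualH L p x = L (-x, -p)

/-- `(q,y) ∈ ∂L(x,p)`, the subdifferential of the Lagrangian `L` at `(x,p)`. -/
def MemSubdiff {H : Type*} [NormedAddCommGroup H] [InnerProductSpace ℝ H]
    (L : H × H → EReal) (x p q y : H) : Prop :=
  ∀ z r : H, L (x, p) + ((⟪q, z - x⟫ + ⟪y, r - p⟫ : ℝ) : EReal) ≤ L (z, r)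

/-- `y ∈ ∂₂L(u,v)`, the subdifferential in the second variable. -/
def MemSubdiff2 {H : Type*} [NormedAddCommGroup H] [InnerProductSpace ℝ H]
    (L : H × H → EReal) (u v y : H) : Prop :=
  ∀ r : H, L (u, v) + ((⟪y, r - v⟫ : ℝ) : EReal) ≤ L (u, r)

/-- `q ∈ ∂₁L(x,p)`, the subdifferential in the first variable. -/
def MemSubdiff1 {H : Type*} [NormedAddCommGroup H] [InnerProductSpace ℝ H]
    (L : H × H → EReal) (x p q : H) : Prop :=
  ∀ z : H, L (x, p) + ((⟪q, z - x⟫ : ℝ) : EReal) ≤ L (z, p)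

/-- The `λ`-regularization of a Lagrangian:
`L_λ(x,p) = inf_z { L(z,p) + ‖x−z‖²/(2λ) } + (λ/2)‖p‖²`. -/
def lagReg {H : Type*} [NormedAddCommGroup H] [InnerProductSpace ℝ H]
    (lam : ℝ) (L : H × H → EReal) (x p : H) : EReal :=
  (⨅ z : H, L (z, p) + ((‖x - z‖ ^ 2 / (2 * lam) : ℝ) : EReal))
    + ((lam / 2 * ‖p‖ ^ 2 : ℝ) : EReal)

open MeasureTheory

/-- `u ∈ A²_H([0,T])` with derivative `du`: `du ∈ L²` and `u(t) = u(0) + ∫₀ᵗ du`. -/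
def A2Path {H : Type*} [NormedAddCommGroup H] [InnerProductSpace ℝ H] [CompleteSpace H]
    (T : ℝ) (u du : ℝ → H) : Prop :=
  MemLp du 2 (volume.restrict (Set.Icc 0 T)) ∧
  ∀ t ∈ Set.Icc (0 : ℝ) T, u t = u 0 + ∫ s in (0 : ℝ)..t, du s


section AuxLemmas

open intervalIntegral

private lemma stmt16_inner_alg {H : Type*} [NormedAddCommGroup H] [InnerProductSpace ℝ H]
    (u v du dv : H) (ω : ℝ) :
    (⟪-(du + ω • u), v - u⟫ + ⟪-u, (dv + ω • v) - (du + ω • u)⟫)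
      + (⟪-(dv + ω • v), u - v⟫ + ⟪-v, (du + ω • u) - (dv + ω • v)⟫)
      = 2 * (⟪du - dv, u - v⟫ + ω * ‖u - v‖ ^ 2) := by
  simp only [inner_neg_left, inner_sub_left, inner_sub_right, inner_add_left, inner_add_right,
    real_inner_smul_left, real_inner_smul_right, norm_sub_sq_real, real_inner_self_eq_norm_sq]
  linear_combination (real_inner_comm v du) + (real_inner_comm u dv) - (real_inner_comm u du)
    - (real_inner_comm v dv) - 2*ω*(real_inner_comm u v)

private lemma stmt16_gronwall (c T : ℝ) (φ : ℝ → ℝ) (hφ : Continuous φ)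
    (H2 : ∀ a b : ℝ, 0 ≤ a → a ≤ b → b ≤ T → φ b - φ a ≤ -c * ∫ s in a..b, φ s) :
    ∀ t ∈ Set.Icc (0:ℝ) T, φ t ≤ Real.exp (-c * t) * φ 0 := by
  intro t ht
  set G : ℝ → ℝ := fun u => ∫ s in (0:ℝ)..u, φ s with hG_def
  have hG : ∀ s : ℝ, HasDerivAt G (φ s) s := fun s =>
    (hφ.integral_hasStrictDerivAt 0 s).hasDerivAt
  have hGcont : Continuous G := continuous_iff_continuousAt.2 fun s => (hG s).continuousAt
  set ρ : ℝ → ℝ := fun s => φ s + c * G s with hρ_def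
  have hρcont : Continuous ρ := hφ.add (continuous_const.mul hGcont)
  have hρmono : ∀ a b : ℝ, 0 ≤ a → a ≤ b → b ≤ T → ρ b ≤ ρ a := by
    intro a b ha hab hb
    have h2 := H2 a b ha hab hb
    have hGab : G b - G a = ∫ s in a..b, φ s := by
      simp only [hG_def]
      rw [← intervalIntegral.integral_add_adjacent_intervals
        (hφ.intervalIntegrable 0 a) (hφ.intervalIntegrable a b)]
      ring
    have h3 : c * G b - c * G a = c * ∫ s in a..b, φ s := by rw [← mul_sub, hGab]
    simp only [hρ_def]
    linarith
  have hexp : ∀ s : ℝ, HasDerivAt (fun u => Real.exp (c * u)) (c * Real.exp (c * s)) s := by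
    intro s
    have h1 : HasDerivAt (fun u : ℝ => c * u) c s := by
      simpa using (hasDerivAt_id s).const_mul c
    exact ((Real.hasDerivAt_exp (c * s)).comp s h1).congr_deriv (mul_comm _ _)
  have hprod : ∀ s : ℝ, HasDerivAt (fun u => Real.exp (c * u) * G u)
      (Real.exp (c * s) * ρ s) s := by
    intro s
    have := (hexp s).mul (hG s)
    refine this.congr_deriv ?_
    show _ = Real.exp (c * s) * (φ s + c * G s); ring
  have hG0 : G 0 = 0 := by simp [hG_def]
  have key : Real.exp (c * t) * G t = ∫ s in (0:ℝ)..t, Real.exp (c * s) * ρ s := by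
    have := intervalIntegral.integral_eq_sub_of_hasDerivAt (fun s _ => hprod s)
      (((Real.continuous_exp.comp (continuous_const.mul continuous_id)).mul
        hρcont).intervalIntegrable 0 t)
    rw [this]
    simp [hG0]
  have hφt : φ t = ρ t - c * G t := by simp only [hρ_def]; ring
  have hρ0 : ρ 0 = φ 0 := by simp [hρ_def, hG0]
  have hρt0 : ρ t ≤ ρ 0 := hρmono 0 t le_rfl ht.1 ht.2
  have hEipos : 0 < Real.exp (-c * t) := Real.exp_pos _
  have hEE : Real.exp (c * t) * Real.exp (-c * t) = 1 := by
    rw [← Real.exp_add]; norm_num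
  have hexpint : c ≠ 0 → (∫ s in (0:ℝ)..t, Real.exp (c * s)) = c⁻¹ * (Real.exp (c * t) - 1) := by
    intro hc0
    have hder : ∀ s : ℝ, HasDerivAt (fun u => c⁻¹ * Real.exp (c * u)) (Real.exp (c * s)) s :=
      fun s => by
        have := (hexp s).const_mul c⁻¹
        refine this.congr_deriv ?_
        rw [← mul_assoc, inv_mul_cancel₀ hc0, one_mul]
    rw [intervalIntegral.integral_eq_sub_of_hasDerivAt (fun s _ => hder s)
      ((Real.continuous_exp.comp (continuous_const.mul continuous_id)).intervalIntegrable 0 t)]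
    simp [mul_sub]
  have sq2 : Real.exp (-c * t) * Real.exp (c * t) = 1 := by rw [mul_comm]; exact hEE
  rcases lt_trichotomy c 0 with hc | hc | hc
  · -- c < 0 : use ρ s ≤ ρ 0
    have hmono : ∫ s in (0:ℝ)..t, Real.exp (c * s) * ρ s
        ≤ ∫ s in (0:ℝ)..t, Real.exp (c * s) * ρ 0 := by
      apply intervalIntegral.integral_mono_on ht.1
      · exact ((Real.continuous_exp.comp (continuous_const.mul continuous_id)).mul
          hρcont).intervalIntegrable 0 t
      · exact ((Real.continuous_exp.comp (continuous_const.mul continuous_id)).mul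
          continuous_const).intervalIntegrable 0 t
      · intro s hs
        exact mul_le_mul_of_nonneg_left (hρmono 0 s le_rfl hs.1 (hs.2.trans ht.2))
          (Real.exp_pos _).le
    have hint : ∫ s in (0:ℝ)..t, Real.exp (c * s) * ρ 0
        = ρ 0 * (c⁻¹ * (Real.exp (c * t) - 1)) := by
      rw [intervalIntegral.integral_mul_const, hexpint hc.ne]; ring
    rw [← key] at hmono
    rw [hint] at hmono
    have hcc : c * c⁻¹ = 1 := mul_inv_cancel₀ hc.ne
    have h1 : ρ 0 * (Real.exp (c * t) - 1) ≤ c * (Real.exp (c * t) * G t) := by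
      have := mul_le_mul_of_nonpos_left hmono hc.le
      calc ρ 0 * (Real.exp (c * t) - 1)
          = c * (ρ 0 * (c⁻¹ * (Real.exp (c * t) - 1))) := by
            linear_combination (-(ρ 0 * (Real.exp (c * t) - 1))) * hcc
        _ ≤ c * (Real.exp (c * t) * G t) := this
    have h2 : Real.exp (-c * t) * (c * (Real.exp (c * t) * G t)) = c * G t := by
      calc Real.exp (-c * t) * (c * (Real.exp (c * t) * G t))
          = (Real.exp (c * t) * Real.exp (-c * t)) * (c * G t) := by ring
        _ = c * G t := by rw [hEE]; ring
    have h3 : Real.exp (-c * t) * (ρ 0 * (Real.exp (c * t) - 1)) ≤ c * G t := by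
      rw [← h2]; exact mul_le_mul_of_nonneg_left h1 hEipos.le
    have h4 : Real.exp (-c * t) * (ρ 0 * (Real.exp (c * t) - 1))
        = ρ 0 - Real.exp (-c * t) * ρ 0 := by linear_combination ρ 0 * sq2
    rw [hφt]
    rw [← hρ0]
    linarith
  · -- c = 0
    subst hc
    simp only [neg_zero, zero_mul, Real.exp_zero, one_mul]
    have := hρmono 0 t le_rfl ht.1 ht.2
    simpa [hρ_def, hG0] using this
  · -- c > 0 : use ρ t ≤ ρ s
    have hmono : ∫ s in (0:ℝ)..t, Real.exp (c * s) * ρ t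
        ≤ ∫ s in (0:ℝ)..t, Real.exp (c * s) * ρ s := by
      apply intervalIntegral.integral_mono_on ht.1
      · exact ((Real.continuous_exp.comp (continuous_const.mul continuous_id)).mul
          continuous_const).intervalIntegrable 0 t
      · exact ((Real.continuous_exp.comp (continuous_const.mul continuous_id)).mul
          hρcont).intervalIntegrable 0 t
      · intro s hs
        exact mul_le_mul_of_nonneg_left (hρmono s t hs.1 hs.2 ht.2) (Real.exp_pos _).le
    have hint : ∫ s in (0:ℝ)..t, Real.exp (c * s) * ρ t
        = ρ t * (c⁻¹ * (Real.exp (c * t) - 1)) := by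
      rw [intervalIntegral.integral_mul_const, hexpint hc.ne']; ring
    rw [← key] at hmono
    rw [hint] at hmono
    have hcc : c * c⁻¹ = 1 := mul_inv_cancel₀ hc.ne'
    have h1 : ρ t * (Real.exp (c * t) - 1) ≤ c * (Real.exp (c * t) * G t) := by
      have := mul_le_mul_of_nonneg_left hmono hc.le
      calc ρ t * (Real.exp (c * t) - 1)
          = c * (ρ t * (c⁻¹ * (Real.exp (c * t) - 1))) := by
            linear_combination (-(ρ t * (Real.exp (c * t) - 1))) * hcc
        _ ≤ c * (Real.exp (c * t) * G t) := this
    have h2 : Real.exp (-c * t) * (c * (Real.exp (c * t) * G t)) = c * G t := by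
      calc Real.exp (-c * t) * (c * (Real.exp (c * t) * G t))
          = (Real.exp (c * t) * Real.exp (-c * t)) * (c * G t) := by ring
        _ = c * G t := by rw [hEE]; ring
    have h3 : Real.exp (-c * t) * (ρ t * (Real.exp (c * t) - 1)) ≤ c * G t := by
      rw [← h2]; exact mul_le_mul_of_nonneg_left h1 hEipos.le
    have h4 : Real.exp (-c * t) * (ρ t * (Real.exp (c * t) - 1))
        = ρ t - Real.exp (-c * t) * ρ t := by linear_combination ρ t * sq2
    have h5 : Real.exp (-c * t) * ρ t ≤ Real.exp (-c * t) * ρ 0 :=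
      mul_le_mul_of_nonneg_left hρt0 hEipos.le
    rw [hφt]
    rw [← hρ0]
    linarith

private lemma stmt16_inner_integrableOn {H : Type*} [NormedAddCommGroup H]
    [InnerProductSpace ℝ H] {f : ℝ → H} {a b : ℝ} (hf : IntegrableOn f (Set.Ioc a b))
    {w : ℝ → H} (hw : ContinuousOn w (Set.Icc a b)) :
    IntegrableOn (fun s => ⟪f s, w s⟫) (Set.Ioc a b) := by
  rcases le_or_gt a b with hab | hab
  · obtain ⟨C, hC⟩ := (isCompact_Icc (a := a) (b := b)).exists_bound_of_continuousOn hw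
    have hwm : AEStronglyMeasurable w (volume.restrict (Set.Ioc a b)) :=
      (hw.mono Set.Ioc_subset_Icc_self).aestronglyMeasurable measurableSet_Ioc
    apply Integrable.mono' (hf.norm.mul_const C)
      (AEStronglyMeasurable.inner hf.aestronglyMeasurable hwm)
    filter_upwards [ae_restrict_mem measurableSet_Ioc] with s hs
    calc ‖(⟪f s, w s⟫ : ℝ)‖ = |(⟪f s, w s⟫ : ℝ)| := rfl
      _ ≤ ‖f s‖ * ‖w s‖ := abs_real_inner_le_norm _ _
      _ ≤ ‖f s‖ * C := mul_le_mul_of_nonneg_left (hC s (Set.Ioc_subset_Icc_self hs))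
          (norm_nonneg _)
  · rw [Set.Ioc_eq_empty (by exact fun h => absurd h hab.not_gt)]
    simp [IntegrableOn]

private lemma stmt16_energy {H : Type*} [NormedAddCommGroup H] [InnerProductSpace ℝ H]
    [CompleteSpace H] {f : ℝ → H} {a b : ℝ} (hab : a ≤ b)
    (hf : IntegrableOn f (Set.Ioc a b))
    {w : ℝ → H} (hw : ∀ s ∈ Set.Icc a b, w s = w a + ∫ r in a..s, f r) :
    ‖w b‖ ^ 2 = ‖w a‖ ^ 2 + ∫ s in a..b, 2 * ⟪f s, w s⟫ := by
  set μ := volume.restrict (Set.Ioc a b) with hμ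
  set k : ℝ × ℝ → ℝ := fun p => ⟪f p.1, f p.2⟫ with hk
  have hfae : AEStronglyMeasurable f μ := hf.aestronglyMeasurable
  have hkm : AEStronglyMeasurable k (μ.prod μ) := (hfae.comp_fst).inner (hfae.comp_snd)
  have hbnd : Integrable (fun p : ℝ × ℝ => ‖f p.1‖ * ‖f p.2‖) (μ.prod μ) :=
    hf.norm.mul_prod hf.norm
  have hk_int : Integrable k (μ.prod μ) := by
    apply Integrable.mono' hbnd hkm
    filter_upwards with p
    exact abs_real_inner_le_norm _ _
  set V : H := ∫ s, f s ∂μ with hV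
  have hVsq : ∫ p, k p ∂(μ.prod μ) = ‖V‖ ^ 2 := by
    rw [MeasureTheory.integral_prod _ hk_int]
    calc (∫ s, ∫ r, k (s, r) ∂μ ∂μ) = ∫ s, ⟪f s, V⟫ ∂μ :=
          integral_congr_ae (Filter.Eventually.of_forall fun s => integral_inner hf (f s))
      _ = ∫ s, ⟪V, f s⟫ ∂μ :=
          integral_congr_ae (Filter.Eventually.of_forall fun s => real_inner_comm _ _)
      _ = ⟪V, V⟫ := integral_inner hf V
      _ = ‖V‖ ^ 2 := real_inner_self_eq_norm_sq V
  set D : Set (ℝ × ℝ) := {p | p.2 ≤ p.1} with hD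
  have hDm : MeasurableSet D := measurableSet_le measurable_snd measurable_fst
  set D' : Set (ℝ × ℝ) := {p | p.1 ≤ p.2} with hD'
  have hD'm : MeasurableSet D' := measurableSet_le measurable_fst measurable_snd
  have hkD : Integrable (D.indicator k) (μ.prod μ) := hk_int.indicator hDm
  have hkD' : Integrable (D'.indicator k) (μ.prod μ) := hk_int.indicator hD'm
  have hswap : ∫ p, D.indicator k p ∂(μ.prod μ) = ∫ p, D'.indicator k p ∂(μ.prod μ) := by
    have h1 : ∀ p : ℝ × ℝ, D.indicator k p.swap = D'.indicator k p := by
      intro p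
      by_cases h : p.1 ≤ p.2
      · rw [Set.indicator_of_mem (show p.swap ∈ D from h) k,
          Set.indicator_of_mem (show p ∈ D' from h) k]
        exact real_inner_comm _ _
      · rw [Set.indicator_of_notMem (show p.swap ∉ D from h) k,
          Set.indicator_of_notMem (show p ∉ D' from h) k]
    rw [← MeasureTheory.integral_prod_swap (D.indicator k)]
    exact integral_congr_ae (Filter.Eventually.of_forall h1)
  have hdm : MeasurableSet {p : ℝ × ℝ | p.1 = p.2} :=
    measurableSet_eq_fun measurable_fst measurable_snd
  have hdiag : (μ.prod μ) {p : ℝ × ℝ | p.1 = p.2} = 0 := by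
    rw [Measure.prod_apply hdm]
    have h0 : ∀ x : ℝ, μ (Prod.mk x ⁻¹' {p : ℝ × ℝ | p.1 = p.2}) = 0 := by
      intro x
      have hpre : Prod.mk x ⁻¹' {p : ℝ × ℝ | p.1 = p.2} = {x} := by
        ext y; simp [eq_comm]
      rw [hpre, hμ, Measure.restrict_apply (measurableSet_singleton x)]
      exact measure_mono_null Set.inter_subset_left Real.volume_singleton
    simp [h0]
  have hptwise : ∀ p : ℝ × ℝ, D.indicator k p + D'.indicator k p
      = k p + ({p : ℝ × ℝ | p.1 = p.2}).indicator k p := by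
    intro p
    simp only [Set.indicator_apply, hD, hD', Set.mem_setOf_eq]
    rcases lt_trichotomy p.1 p.2 with h | h | h
    · simp [h.le, h.not_ge, h.ne]
    · simp [h, le_of_eq h, ge_of_eq h]
    · simp [h.le, h.not_ge, h.ne']
  have hdiagzero : ∫ p, ({p : ℝ × ℝ | p.1 = p.2}).indicator k p ∂(μ.prod μ) = 0 := by
    rw [MeasureTheory.integral_indicator hdm]
    exact setIntegral_measure_zero _ hdiag
  have h2I : (∫ p, D.indicator k p ∂(μ.prod μ)) + (∫ p, D.indicator k p ∂(μ.prod μ))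
      = ‖V‖ ^ 2 := by
    nth_rewrite 2 [hswap]
    rw [← integral_add hkD hkD',
      integral_congr_ae (Filter.Eventually.of_forall hptwise),
      integral_add hk_int (hk_int.indicator hdm), hdiagzero, hVsq, add_zero]
  have hWcont : ContinuousOn (fun s => ∫ r in a..s, f r) (Set.Icc a b) := by
    have hIcc : IntegrableOn f (Set.uIcc a b) volume := by
      rw [Set.uIcc_of_le hab, integrableOn_Icc_iff_integrableOn_Ioc]
      exact hf
    have := intervalIntegral.continuousOn_primitive_interval hIcc
    rwa [Set.uIcc_of_le hab] at this
  have hJ : ∫ s in Set.Ioc a b, (⟪f s, ∫ r in a..s, f r⟫ : ℝ)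
      = ∫ p, D.indicator k p ∂(μ.prod μ) := by
    have hunc : Integrable (Function.uncurry fun s r => D.indicator k (s, r)) (μ.prod μ) := hkD
    rw [← MeasureTheory.integral_integral hunc]
    apply setIntegral_congr_ae measurableSet_Ioc
    filter_upwards with s hs
    have h1 : ∀ r : ℝ, D.indicator k (s, r) = (Set.Iic s).indicator (fun r => k (s, r)) r := by
      intro r
      simp only [Set.indicator_apply, hD, Set.mem_setOf_eq, Set.mem_Iic]
    calc (⟪f s, ∫ r in a..s, f r⟫ : ℝ)
        = ⟪f s, ∫ r in Set.Ioc a s, f r⟫ := by rw [intervalIntegral.integral_of_le hs.1.le]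
      _ = ∫ r in Set.Ioc a s, (⟪f s, f r⟫ : ℝ) :=
          (integral_inner (hf.mono_set (Set.Ioc_subset_Ioc_right hs.2)) (f s)).symm
      _ = ∫ r in Set.Ioc a b ∩ Set.Iic s, k (s, r) := by
          rw [Set.Ioc_inter_Iic, min_eq_right hs.2]
      _ = ∫ r, (Set.Iic s).indicator (fun r => k (s, r)) r ∂μ := by
          rw [hμ, setIntegral_indicator measurableSet_Iic]
      _ = ∫ r, D.indicator k (s, r) ∂μ := by
          exact integral_congr_ae (Filter.Eventually.of_forall fun r => (h1 r).symm)
  have hVint : V = ∫ s in a..b, f s := by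
    rw [intervalIntegral.integral_of_le hab]
  have hwb : w b = w a + V := by
    rw [hw b (Set.right_mem_Icc.2 hab), hVint]
  have hfinal : ∫ s in a..b, 2 * ⟪f s, w s⟫ = 2 * ⟪w a, V⟫ + ‖V‖ ^ 2 := by
    rw [intervalIntegral.integral_of_le hab]
    have hcong : Set.EqOn (fun s => 2 * (⟪f s, w s⟫ : ℝ))
        (fun s => 2 * (⟪f s, w a⟫ : ℝ) + 2 * (⟪f s, ∫ r in a..s, f r⟫ : ℝ)) (Set.Ioc a b) := by
      intro s hs
      simp only
      rw [hw s (Set.Ioc_subset_Icc_self hs), inner_add_right]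
      ring
    rw [setIntegral_congr_fun measurableSet_Ioc hcong]
    have int1 : IntegrableOn (fun s => 2 * (⟪f s, w a⟫ : ℝ)) (Set.Ioc a b) :=
      (stmt16_inner_integrableOn hf continuousOn_const).const_mul 2
    have int2 : IntegrableOn (fun s => 2 * (⟪f s, ∫ r in a..s, f r⟫ : ℝ)) (Set.Ioc a b) :=
      (stmt16_inner_integrableOn hf hWcont).const_mul 2
    rw [integral_add int1 int2]
    have e1 : ∫ s in Set.Ioc a b, 2 * (⟪f s, w a⟫ : ℝ) = 2 * ⟪w a, V⟫ := by
      rw [MeasureTheory.integral_const_mul]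
      congr 1
      calc (∫ s in Set.Ioc a b, (⟪f s, w a⟫ : ℝ))
          = ∫ s in Set.Ioc a b, (⟪w a, f s⟫ : ℝ) :=
            integral_congr_ae (Filter.Eventually.of_forall fun s => real_inner_comm _ _)
        _ = ⟪w a, V⟫ := integral_inner hf (w a)
    have e2 : ∫ s in Set.Ioc a b, 2 * (⟪f s, ∫ r in a..s, f r⟫ : ℝ) = ‖V‖ ^ 2 := by
      rw [MeasureTheory.integral_const_mul, hJ, ← h2I]
      ring
    rw [e1, e2]
  rw [hwb, hfinal, norm_add_sq_real]
  ring

end AuxLemmas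

/-- two solutions of the evolution inclusion associated to an ASD Lagrangian
satisfy `‖x(t) − y(t)‖ ≤ e^{−ωt} ‖x(0) − y(0)‖`; in particular the flow is a contraction for
`ω > 0` and `1`-Lipschitz for `ω = 0`. -/
theorem stmt16 {H : Type*} [NormedAddCommGroup H] [InnerProductSpace ℝ H] [CompleteSpace H]
    (L : H × H → EReal)
    (hconv : ERealConvexOn L)
    (hlsc : LowerSemicontinuous L)
    (hproper : ∃ z, L z ≠ ⊤) (hreal : ∀ z, L z ≠ ⊥)
    (hASD : IsASDH L)
    (ω T : ℝ) (hT : 0 < T)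
    (x dx y dy : ℝ → H)
    (hx : A2Path T x dx) (hy : A2Path T y dy)
    (hxsol : ∀ᵐ t ∂(volume.restrict (Set.Icc (0 : ℝ) T)),
      MemSubdiff L (x t) (dx t + ω • x t) (-(dx t + ω • x t)) (-(x t)))
    (hysol : ∀ᵐ t ∂(volume.restrict (Set.Icc (0 : ℝ) T)),
      MemSubdiff L (y t) (dy t + ω • y t) (-(dy t + ω • y t)) (-(y t))) :
    ∀ t ∈ Set.Icc (0 : ℝ) T, ‖x t - y t‖ ≤ Real.exp (-ω * t) * ‖x 0 - y 0‖ := by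
  have hae : ∀ᵐ t ∂(volume.restrict (Set.Icc (0 : ℝ) T)),
      (⟪dx t - dy t, x t - y t⟫ : ℝ) + ω * ‖x t - y t‖ ^ 2 ≤ 0 := by
    filter_upwards [hxsol, hysol] with t h1 h2
    obtain ⟨z0, hz0⟩ := hproper
    have e1 := h1 (y t) (dy t + ω • y t)
    have e2 := h2 (x t) (dx t + ω • x t)
    have hne_top : L (x t, dx t + ω • x t) ≠ ⊤ := by
      intro htop
      have h3 := h1 z0.1 z0.2
      rw [htop, EReal.top_add_coe] at h3
      exact hz0 (top_le_iff.mp h3)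
    have hchain : L (x t, dx t + ω • x t)
        + ((⟪-(dx t + ω • x t), y t - x t⟫
            + ⟪-(x t), (dy t + ω • y t) - (dx t + ω • x t)⟫ : ℝ) : EReal)
        + ((⟪-(dy t + ω • y t), x t - y t⟫
            + ⟪-(y t), (dx t + ω • x t) - (dy t + ω • y t)⟫ : ℝ) : EReal)
        ≤ L (x t, dx t + ω • x t) :=
      le_trans (add_le_add e1 le_rfl) e2
    rw [← EReal.coe_toReal hne_top (hreal _), ← EReal.coe_add, ← EReal.coe_add] at hchain
    have hre := EReal.coe_le_coe_iff.mp hchain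
    have hid := stmt16_inner_alg (x t) (y t) (dx t) (dy t) ω
    linarith
  intro t ht
  haveI : IsFiniteMeasure (volume.restrict (Set.Icc (0:ℝ) T)) := by
    constructor
    rw [Measure.restrict_apply_univ]
    exact measure_Icc_lt_top
  have hdx : IntegrableOn dx (Set.Icc 0 T) := hx.1.integrable one_le_two
  have hdy : IntegrableOn dy (Set.Icc 0 T) := hy.1.integrable one_le_two
  set dw : ℝ → H := fun s => dx s - dy s with hdw_def
  set w : ℝ → H := fun s => x s - y s with hw_def
  have hdw : IntegrableOn dw (Set.Icc 0 T) := hdx.sub hdy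
  have hii : ∀ a b : ℝ, 0 ≤ a → b ≤ T → a ≤ b → IntervalIntegrable dw volume a b := by
    intro a b ha hb hab
    have h1 : IntegrableOn dw (Set.uIcc a b) := by
      rw [Set.uIcc_of_le hab]
      exact hdw.mono_set (Set.Icc_subset_Icc ha hb)
    exact h1.intervalIntegrable
  have hiix : ∀ s ∈ Set.Icc (0:ℝ) T, IntervalIntegrable dx volume 0 s := by
    intro s hs
    have h1 : IntegrableOn dx (Set.uIcc 0 s) := by
      rw [Set.uIcc_of_le hs.1]
      exact hdx.mono_set (Set.Icc_subset_Icc le_rfl hs.2)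
    exact h1.intervalIntegrable
  have hiiy : ∀ s ∈ Set.Icc (0:ℝ) T, IntervalIntegrable dy volume 0 s := by
    intro s hs
    have h1 : IntegrableOn dy (Set.uIcc 0 s) := by
      rw [Set.uIcc_of_le hs.1]
      exact hdy.mono_set (Set.Icc_subset_Icc le_rfl hs.2)
    exact h1.intervalIntegrable
  have hweq : ∀ s ∈ Set.Icc (0:ℝ) T, w s = w 0 + ∫ r in (0:ℝ)..s, dw r := by
    intro s hs
    simp only [hw_def, hdw_def]
    rw [hx.2 s hs, hy.2 s hs, intervalIntegral.integral_sub (hiix s hs) (hiiy s hs)]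
    abel
  have hwsub : ∀ a b : ℝ, 0 ≤ a → a ≤ b → b ≤ T →
      ∀ s ∈ Set.Icc a b, w s = w a + ∫ r in a..s, dw r := by
    intro a b ha hab hb s hs
    have hsT : s ∈ Set.Icc (0:ℝ) T := ⟨ha.trans hs.1, hs.2.trans hb⟩
    have haT : a ∈ Set.Icc (0:ℝ) T := ⟨ha, hab.trans hb⟩
    rw [hweq s hsT, hweq a haT,
      ← intervalIntegral.integral_add_adjacent_intervals
        (hii 0 a le_rfl haT.2 ha) (hii a s ha hsT.2 hs.1)]
    abel
  have hPcont : ContinuousOn (fun u => ∫ r in (0:ℝ)..u, dw r) (Set.Icc 0 T) := by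
    have h1 : IntegrableOn dw (Set.uIcc 0 T) := by rw [Set.uIcc_of_le hT.le]; exact hdw
    have := intervalIntegral.continuousOn_primitive_interval h1
    rwa [Set.uIcc_of_le hT.le] at this
  have hwcont : ContinuousOn w (Set.Icc 0 T) := by
    apply ContinuousOn.congr (continuousOn_const.add hPcont)
    intro s hs
    exact hweq s hs
  set p0 : ℝ → ℝ := fun s => max 0 (min s T) with hp0_def
  have hp0cont : Continuous p0 := continuous_const.max (continuous_id.min continuous_const)
  have hp0mem : ∀ s, p0 s ∈ Set.Icc (0:ℝ) T := fun s =>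
    ⟨le_max_left _ _, max_le hT.le (min_le_right _ _)⟩
  have hp0id : ∀ s ∈ Set.Icc (0:ℝ) T, p0 s = s := by
    intro s hs
    simp only [hp0_def]
    rw [min_eq_left hs.2, max_eq_right hs.1]
  set φ : ℝ → ℝ := fun s => ‖w (p0 s)‖ ^ 2 with hφ_def
  have hφcont : Continuous φ := ((hwcont.comp_continuous hp0cont hp0mem).norm).pow 2
  have hφeq : ∀ s ∈ Set.Icc (0:ℝ) T, φ s = ‖w s‖ ^ 2 := by
    intro s hs; simp only [hφ_def, hp0id s hs]
  have H2 : ∀ a b : ℝ, 0 ≤ a → a ≤ b → b ≤ T →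
      φ b - φ a ≤ -(2 * ω) * ∫ s in a..b, φ s := by
    intro a b ha hab hb
    have hfab : IntegrableOn dw (Set.Ioc a b) :=
      hdw.mono_set ((Set.Ioc_subset_Icc_self).trans (Set.Icc_subset_Icc ha hb))
    have hen := stmt16_energy hab hfab (hwsub a b ha hab hb)
    rw [hφeq b ⟨ha.trans hab, hb⟩, hφeq a ⟨ha, hab.trans hb⟩]
    have hsub : Set.Ioc a b ⊆ Set.Icc (0:ℝ) T :=
      Set.Ioc_subset_Icc_self.trans (Set.Icc_subset_Icc ha hb)
    have hstep : (∫ s in a..b, 2 * ⟪dw s, w s⟫) ≤ ∫ s in a..b, -(2*ω) * φ s := by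
      rw [intervalIntegral.integral_of_le hab, intervalIntegral.integral_of_le hab]
      apply integral_mono_ae
      · exact (stmt16_inner_integrableOn hfab
          (hwcont.mono (Set.Icc_subset_Icc ha hb))).const_mul 2
      · exact (continuous_const.mul hφcont).integrableOn_Ioc
      · filter_upwards [ae_restrict_of_ae_restrict_of_subset hsub hae,
          ae_restrict_mem measurableSet_Ioc] with s h1 h2
        have h3 := hφeq s (hsub h2)
        rw [h3]
        simp only [hdw_def, hw_def]
        nlinarith [h1]
    have hconstmul : -(2*ω) * ∫ s in a..b, φ s = ∫ s in a..b, -(2*ω) * φ s :=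
      (intervalIntegral.integral_const_mul _ _).symm
    linarith
  have hg := stmt16_gronwall (2*ω) T φ hφcont H2 t ht
  have h0T : (0:ℝ) ∈ Set.Icc (0:ℝ) T := ⟨le_rfl, hT.le⟩
  rw [hφeq t ht, hφeq 0 h0T] at hg
  have hexp2 : Real.exp (-(2*ω) * t) = (Real.exp (-ω * t)) ^ 2 := by
    rw [sq, ← Real.exp_add]; ring_nf
  have hfin : ‖w t‖ ^ 2 ≤ (Real.exp (-ω * t) * ‖w 0‖) ^ 2 := by
    rw [mul_pow, ← hexp2]; exact hg
  have hfin2 := Real.sqrt_le_sqrt hfin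
  rw [Real.sqrt_sq (norm_nonneg _),
    Real.sqrt_sq (mul_nonneg (Real.exp_pos _).le (norm_nonneg _))] at hfin2
  simpa [hw_def] using hfin2
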